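/- If S is a set of points in the Euclidean plane ℝ² such that the Euclidean distance between any two points of S is an integer, and S is not collinear (i.e., S contains three points not lying on a common line), then S is finite. -/

import Mathlib

open scoped RealInnerProductSpace
noncomputable abbrev E2 := EuclideanSpace ℝ (Fin 2)

lemma inner2 (x y : E2) : ⟪x, y⟫ = x 0 * y 0 + x 1 * y 1 := by
  simp [PiLp.inner_apply, Fin.sum_univ_two, RCLike.inner_apply]; ring

lemma norm2 (x : E2) : ‖x‖^2 = x 0^2 + x 1^2 := by
  rw [← real_inner_self_eq_norm_sq, inner2]; ring

lemma parallel_of_det {x y : E2} (hy : y ≠ 0) (h : x 0 * y 1 - x 1 * y 0 = 0) :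
    ∃ r : ℝ, x = r • y := by
  have hy' : y 0 ≠ 0 ∨ y 1 ≠ 0 := by
    by_contra hc
    push_neg at hc
    exact hy (by ext i; fin_cases i <;> simp [hc.1, hc.2])
  rcases hy' with h0 | h0
  · refine ⟨x 0 / y 0, ?_⟩
    ext i; fin_cases i
    · simp; field_simp
    · simp; field_simp; nlinarith [h]
  · refine ⟨x 1 / y 1, ?_⟩
    ext i; fin_cases i
    · simp; field_simp; nlinarith [h]
    · simp; field_simp

lemma quad_finite {a b c : ℝ} (h : ¬(a = 0 ∧ b = 0 ∧ c = 0)) :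
    {t : ℝ | a*t^2 + b*t + c = 0}.Finite := by
  have hp : (Polynomial.C a * Polynomial.X^2 + Polynomial.C b * Polynomial.X + Polynomial.C c)
      ≠ 0 := by
    intro hzero
    apply h
    refine ⟨?_, ?_, ?_⟩
    · have := congrArg (Polynomial.coeff · 2) hzero; simpa using this
    · have := congrArg (Polynomial.coeff · 1) hzero; simpa using this
    · have := congrArg (Polynomial.coeff · 0) hzero; simpa using this
  have hf := Polynomial.finite_setOf_isRoot hp
  refine hf.subset ?_
  intro t ht
  simp only [Set.mem_setOf_eq, Polynomial.IsRoot, Polynomial.eval_add, Polynomial.eval_mul,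
    Polynomial.eval_pow, Polynomial.eval_C, Polynomial.eval_X]
  simpa using ht

-- expansion of the quadratic along a line
lemma line_expand (A B P0 n : E2) (j t : ℝ) (hj : j ≠ 0) :
    ‖P0 + t • n - A‖^2 - ((j^2 + 2*⟪P0 + t • n, B - A⟫ + ‖A‖^2 - ‖B‖^2)/(2*j))^2
    = (‖n‖^2 - (⟪n, B - A⟫/j)^2) * t^2
      + (2*⟪P0 - A, n⟫ - 2*((j^2 + 2*⟪P0, B - A⟫ + ‖A‖^2 - ‖B‖^2)/(2*j))*(⟪n, B - A⟫/j)) * t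
      + (‖P0 - A‖^2 - ((j^2 + 2*⟪P0, B - A⟫ + ‖A‖^2 - ‖B‖^2)/(2*j))^2) := by
  simp only [norm2, inner2]
  have e0 : (P0 + t • n - A) 0 = P0 0 + t * n 0 - A 0 := by simp
  have e1 : (P0 + t • n - A) 1 = P0 1 + t * n 1 - A 1 := by simp
  have f0 : (P0 + t • n) 0 = P0 0 + t * n 0 := by simp
  have f1 : (P0 + t • n) 1 = P0 1 + t * n 1 := by simp
  have g0 : (P0 - A) 0 = P0 0 - A 0 := by simp
  have g1 : (P0 - A) 1 = P0 1 - A 1 := by simp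
  rw [e0, e1, f0, f1, g0, g1]
  field_simp
  ring
lemma key (A B P0 n : E2) (j : ℝ) (hj : j ≠ 0) (hn : n ≠ 0)
    (ha : ‖n‖^2 - (⟪n, B - A⟫/j)^2 = 0)
    (hb : 2*⟪P0 - A, n⟫ - 2*((j^2 + 2*⟪P0, B - A⟫ + ‖A‖^2 - ‖B‖^2)/(2*j))*(⟪n, B - A⟫/j) = 0)
    (hc : ‖P0 - A‖^2 - ((j^2 + 2*⟪P0, B - A⟫ + ‖A‖^2 - ‖B‖^2)/(2*j))^2 = 0) :
    (∃ s : ℝ, A = P0 + s • n) ∧ (∃ r : ℝ, B - A = r • n) := by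
  set g : ℝ := ⟪n, B - A⟫/j with hg
  set L0 : ℝ := (j^2 + 2*⟪P0, B - A⟫ + ‖A‖^2 - ‖B‖^2)/(2*j) with hL0
  have h1 : ⟪P0 - A, n⟫ = L0 * g := by linarith
  have h2 : ‖n‖^2 = g^2 := by linarith
  have h3 : ‖P0 - A‖^2 = L0^2 := by linarith
  have hdet : (P0 - A) 0 * n 1 - (P0 - A) 1 * n 0 = 0 := by
    have lag : ((P0 - A) 0 * n 1 - (P0 - A) 1 * n 0)^2
        = ‖P0 - A‖^2 * ‖n‖^2 - ⟪P0 - A, n⟫^2 := by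
      simp only [norm2, inner2, PiLp.sub_apply]; ring
    have : ((P0 - A) 0 * n 1 - (P0 - A) 1 * n 0)^2 = 0 := by
      rw [lag, h1, h2, h3]; ring
    exact pow_eq_zero_iff (n := 2) (by norm_num) |>.mp this
  obtain ⟨s, hs⟩ := parallel_of_det hn hdet
  have hA : A = P0 + (-s) • n := by
    rw [neg_smul, ← hs]; abel
  refine ⟨⟨-s, hA⟩, ?_⟩
  have hinn : s * ‖n‖^2 = L0 * g := by
    rw [← h1, hs, real_inner_smul_left, real_inner_self_eq_norm_sq]
  have hnrm : L0^2 = s^2 * ‖n‖^2 := by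
    rw [← h3, hs, norm_smul, mul_pow, Real.norm_eq_abs, sq_abs]
  have hLA' : L0 - s * g = 0 := by
    have hsq : (L0 - s * g)^2 = 0 := by
      linear_combination hnrm - s^2 * h2 + 2*s*hinn
    exact pow_eq_zero_iff (n := 2) (by norm_num) |>.mp hsq
  have hPA : ⟪P0, B - A⟫ = ⟪A, B - A⟫ + s * (j * g) := by
    have h4 : ⟪P0 - A, B - A⟫ = s * ⟪n, B - A⟫ := by rw [hs, real_inner_smul_left]
    have h5 : ⟪n, B - A⟫ = j * g := by rw [hg]; field_simp
    have h6 : ⟪P0 - A, B - A⟫ = ⟪P0, B - A⟫ - ⟪A, B - A⟫ := by rw [inner_sub_left]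
    rw [h5] at h4; linarith
  have hz : j^2 + 2*⟪A, B - A⟫ + ‖A‖^2 - ‖B‖^2 = 0 := by
    have he : L0 - s*g = (j^2 + 2*⟪A, B - A⟫ + ‖A‖^2 - ‖B‖^2)/(2*j) := by
      rw [hL0, hPA]; field_simp; ring
    rw [he] at hLA'
    field_simp at hLA'
    simp only [inner2, PiLp.sub_apply] at hLA' ⊢
    linarith [hLA']
  have hj2 : j^2 = ‖B - A‖^2 := by
    simp only [norm2, inner2, PiLp.sub_apply] at hz ⊢
    linear_combination hz
  have hdet2 : (B - A) 0 * n 1 - (B - A) 1 * n 0 = 0 := by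
    have lag : ((B - A) 0 * n 1 - (B - A) 1 * n 0)^2
        = ‖B - A‖^2 * ‖n‖^2 - ⟪B - A, n⟫^2 := by
      simp only [norm2, inner2, PiLp.sub_apply]; ring
    have h5 : ⟪B - A, n⟫ = j * g := by
      rw [real_inner_comm, hg]; field_simp
    have : ((B - A) 0 * n 1 - (B - A) 1 * n 0)^2 = 0 := by
      rw [lag, h5]
      linear_combination (-(‖n‖:ℝ)^2) * hj2 + j^2 * ha
    exact pow_eq_zero_iff (n := 2) (by norm_num) |>.mp this
  exact parallel_of_det hn hdet2
-- (a) distance equals linear form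
lemma dist_eq_ell (A B P : E2) (j : ℝ) (hj : j ≠ 0) (h : dist P A - dist P B = j) :
    dist P A = (j^2 + 2*⟪P, B - A⟫ + ‖A‖^2 - ‖B‖^2)/(2*j) := by
  have hdd : (dist P A)^2 - (dist P B)^2 = 2*⟪P, B - A⟫ + ‖A‖^2 - ‖B‖^2 := by
    rw [dist_eq_norm, dist_eq_norm]
    simp only [norm2, inner2, PiLp.sub_apply]
    ring
  have hj' : dist P B = dist P A - j := by linarith
  rw [eq_div_iff (by simpa using hj : (2:ℝ)*j ≠ 0)]
  linear_combination hdd - (dist P A + dist P B - j) * h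

-- (c) equidistance gives a linear equation
lemma dist_eq_line (A B P : E2) (h : dist P A = dist P B) :
    ⟪P, B - A⟫ = (‖B‖^2 - ‖A‖^2)/2 := by
  have h2 : (dist P A)^2 = (dist P B)^2 := by rw [h]
  rw [dist_eq_norm, dist_eq_norm] at h2
  simp only [norm2, inner2, PiLp.sub_apply] at h2 ⊢
  linarith

-- (b) line parametrization
lemma line_param (v : E2) (hv : v ≠ 0) (c : ℝ) :
    ∃ P0 n : E2, n ≠ 0 ∧ (∀ P : E2, ⟪P, v⟫ = c → ∃ t : ℝ, P = P0 + t • n) ∧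
      (∀ t : ℝ, ⟪P0 + t • n, v⟫ = c) := by
  have hv2 : v 0 ^ 2 + v 1 ^ 2 ≠ 0 := by
    intro hz
    apply hv
    have h0 : v 0 = 0 := by nlinarith [sq_nonneg (v 0), sq_nonneg (v 1)]
    have h1 : v 1 = 0 := by nlinarith [sq_nonneg (v 0), sq_nonneg (v 1)]
    ext i; fin_cases i <;> simp [h0, h1]
  refine ⟨(c/(v 0 ^2 + v 1 ^2)) • v, (WithLp.equiv 2 (Fin 2 → ℝ)).symm ![-(v 1), v 0], ?_, ?_, ?_⟩
  · intro hz
    apply hv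
    have h0 := congrArg (fun w : E2 => w 0) hz
    have h1 := congrArg (fun w : E2 => w 1) hz
    simp [WithLp.equiv_symm_apply, PiLp.toLp_apply] at h0 h1
    ext i; fin_cases i <;> simp [h0, h1]
  · intro P hP
    rw [inner2] at hP
    refine ⟨((P 1 - (c/(v 0 ^2 + v 1 ^2)) * v 1) * v 0
      - (P 0 - (c/(v 0 ^2 + v 1 ^2)) * v 0) * v 1)/(v 0 ^2 + v 1 ^2), ?_⟩
    ext i; fin_cases i
    · simp only [WithLp.equiv_symm_apply, PiLp.toLp_apply, PiLp.add_apply, PiLp.smul_apply, smul_eq_mul,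
        Fin.zero_eta, Fin.mk_one, Matrix.cons_val_zero, Matrix.cons_val_one, Matrix.head_cons]
      field_simp
      linear_combination (v 0 * (v 0^2 + v 1^2)) * hP
    · simp only [WithLp.equiv_symm_apply, PiLp.toLp_apply, PiLp.add_apply, PiLp.smul_apply, smul_eq_mul,
        Fin.zero_eta, Fin.mk_one, Matrix.cons_val_zero, Matrix.cons_val_one, Matrix.head_cons]
      field_simp
      linear_combination (v 1 * (v 0^2 + v 1^2)) * hP
  · intro t
    rw [inner2]
    simp [WithLp.equiv_symm_apply, PiLp.toLp_apply]
    field_simp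
    ring
lemma eq_of_orth (u w d : E2) (hdet : u 0 * w 1 - u 1 * w 0 ≠ 0)
    (h1 : ⟪d, u⟫ = 0) (h2 : ⟪d, w⟫ = 0) : d = 0 := by
  rw [inner2] at h1 h2
  ext i; fin_cases i
  · have hd : d 0 * (u 0 * w 1 - u 1 * w 0) = 0 := by linear_combination (w 1)*h1 - (u 1)*h2
    simpa using (mul_eq_zero.mp hd).resolve_right hdet
  · have hd : d 1 * (u 0 * w 1 - u 1 * w 0) = 0 := by linear_combination (-(w 0))*h1 + (u 0)*h2
    simpa using (mul_eq_zero.mp hd).resolve_right hdet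

lemma conic_line (A B P0 n : E2) (j : ℝ) (hj : j ≠ 0) (hn : n ≠ 0) :
    {t : ℝ | ‖P0 + t • n - A‖^2
      = ((j^2 + 2*⟪P0 + t • n, B - A⟫ + ‖A‖^2 - ‖B‖^2)/(2*j))^2}.Finite
    ∨ ((∃ s : ℝ, A = P0 + s • n) ∧ (∃ r : ℝ, B - A = r • n)) := by
  by_cases h : (‖n‖^2 - (⟪n, B - A⟫/j)^2 = 0)
    ∧ (2*⟪P0 - A, n⟫ - 2*((j^2 + 2*⟪P0, B - A⟫ + ‖A‖^2 - ‖B‖^2)/(2*j))*(⟪n, B - A⟫/j) = 0)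
    ∧ (‖P0 - A‖^2 - ((j^2 + 2*⟪P0, B - A⟫ + ‖A‖^2 - ‖B‖^2)/(2*j))^2 = 0)
  · exact Or.inr (key A B P0 n j hj hn h.1 h.2.1 h.2.2)
  · left
    refine (quad_finite h).subset ?_
    intro t ht
    simp only [Set.mem_setOf_eq] at ht ⊢
    have he := line_expand A B P0 n j t hj
    rw [ht] at he
    linarith [he]

lemma collinear_of_parallel (A B C n : E2) (r r' : ℝ) (h1 : B - A = r • n)
    (h2 : C - A = r' • n) : Collinear ℝ ({A, B, C} : Set E2) := by
  rw [collinear_iff_of_mem (Set.mem_insert A {B, C})]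
  refine ⟨n, ?_⟩
  intro p hp
  rcases hp with rfl | rfl | rfl
  · exact ⟨0, by simp⟩
  · exact ⟨r, by rw [← h1]; simp⟩
  · exact ⟨r', by rw [← h2]; simp⟩


lemma fiber_finite (A B C : E2) (hcol : ¬ Collinear ℝ ({A, B, C} : Set E2)) (j k : ℝ) :
    {P : E2 | dist P A - dist P B = j ∧ dist P A - dist P C = k}.Finite := by
  have hAB : A ≠ B := ne₁₂_of_not_collinear hcol
  have hAC : A ≠ C := ne₁₃_of_not_collinear hcol
  have hBA : B - A ≠ 0 := sub_ne_zero.mpr (Ne.symm hAB)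
  have hCA : C - A ≠ 0 := sub_ne_zero.mpr (Ne.symm hAC)
  -- helper: A not equidistant degenerate
  have hAonB : ⟪A, B - A⟫ ≠ (‖B‖^2 - ‖A‖^2)/2 := by
    intro h
    apply hBA
    have hsq : ‖B - A‖^2 = 0 := by
      rw [inner2] at h
      rw [norm2, norm2] at h
      rw [norm2]
      simp only [PiLp.sub_apply] at h ⊢
      linear_combination (-2)*h
    simpa using pow_eq_zero_iff (n := 2) (by norm_num) |>.mp hsq
  have hAonC : ⟪A, C - A⟫ ≠ (‖C‖^2 - ‖A‖^2)/2 := by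
    intro h
    apply hCA
    have hsq : ‖C - A‖^2 = 0 := by
      rw [inner2] at h
      rw [norm2, norm2] at h
      rw [norm2]
      simp only [PiLp.sub_apply] at h ⊢
      linear_combination (-2)*h
    simpa using pow_eq_zero_iff (n := 2) (by norm_num) |>.mp hsq
  have hnotpar : ∀ r r' : ℝ, ∀ n : E2, B - A = r • n → C - A = r' • n → False := by
    intro r r' n h1 h2
    exact hcol (collinear_of_parallel A B C n r r' h1 h2)
  by_cases hj : j = 0 <;> by_cases hk : k = 0
  · -- both zero : two perpendicular bisectors
    subst hj; subst hk
    have hdet : (B - A) 0 * (C - A) 1 - (B - A) 1 * (C - A) 0 ≠ 0 := by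
      intro h
      obtain ⟨r, hr⟩ := parallel_of_det hCA h
      exact hnotpar r 1 (C - A) hr (one_smul ℝ (C - A)).symm
    apply Set.Subsingleton.finite
    intro P hP Q hQ
    simp only [Set.mem_setOf_eq, sub_eq_zero] at hP hQ
    have h1 : ⟪P - Q, B - A⟫ = 0 := by
      rw [inner_sub_left, dist_eq_line A B P hP.1, dist_eq_line A B Q hQ.1]; ring
    have h2 : ⟪P - Q, C - A⟫ = 0 := by
      rw [inner_sub_left, dist_eq_line A C P hP.2, dist_eq_line A C Q hQ.2]; ring
    have := eq_of_orth (B - A) (C - A) (P - Q) hdet h1 h2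
    exact sub_eq_zero.mp this
  · -- j = 0, k ≠ 0 : perpendicular bisector of AB as line, conic from C
    subst hj
    obtain ⟨P0, n, hn, hcover, honline⟩ := line_param (B - A) hBA ((‖B‖^2 - ‖A‖^2)/2)
    rcases conic_line A C P0 n k hk hn with hfin | ⟨⟨s, hA⟩, _⟩
    · refine ((hfin.image (fun t => P0 + t • n)).subset ?_)
      rintro P ⟨hP1, hP2⟩
      rw [sub_eq_zero] at hP1
      obtain ⟨t, ht⟩ := hcover P (dist_eq_line A B P hP1)
      refine ⟨t, ?_, ht.symm⟩
      have he := dist_eq_ell A C P k hk hP2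
      rw [dist_eq_norm] at he
      simp only [Set.mem_setOf_eq, ← ht]
      rw [← he]
    · have hs := honline s
      rw [← hA] at hs
      exact (hAonB hs).elim
  · -- j ≠ 0, k = 0
    subst hk
    obtain ⟨P0, n, hn, hcover, honline⟩ := line_param (C - A) hCA ((‖C‖^2 - ‖A‖^2)/2)
    rcases conic_line A B P0 n j hj hn with hfin | ⟨⟨s, hA⟩, _⟩
    · refine ((hfin.image (fun t => P0 + t • n)).subset ?_)
      rintro P ⟨hP1, hP2⟩
      rw [sub_eq_zero] at hP2
      obtain ⟨t, ht⟩ := hcover P (dist_eq_line A C P hP2)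
      refine ⟨t, ?_, ht.symm⟩
      have he := dist_eq_ell A B P j hj hP1
      rw [dist_eq_norm] at he
      simp only [Set.mem_setOf_eq, ← ht]
      rw [← he]
    · have hs := honline s
      rw [← hA] at hs
      exact (hAonC hs).elim
  · -- both nonzero
    set v : E2 := (2*k) • (B - A) - (2*j) • (C - A) with hv
    have hvne : v ≠ 0 := by
      intro h
      rw [hv, sub_eq_zero] at h
      apply hnotpar 1 ((1/(2*j)) * (2*k)) (B - A) (one_smul ℝ (B - A)).symm
      have hj2 : (1/(2*j)) * (2*j) = 1 := by field_simp
      calc C - A = ((1/(2*j)) * (2*j)) • (C - A) := by rw [hj2, one_smul]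
        _ = (1/(2*j)) • ((2*j) • (C - A)) := by rw [smul_smul]
        _ = (1/(2*j)) • ((2*k) • (B - A)) := by rw [← h]
        _ = ((1/(2*j)) * (2*k)) • (B - A) := by rw [smul_smul]
    set c : ℝ := j*(k^2+‖A‖^2-‖C‖^2) - k*(j^2+‖A‖^2-‖B‖^2) with hcc
    obtain ⟨P0, n, hn, hcover, honline⟩ := line_param v hvne c
    have hline : ∀ P : E2, dist P A - dist P B = j → dist P A - dist P C = k → ⟪P, v⟫ = c := by
      intro P h1 h2
      have e1 := dist_eq_ell A B P j hj h1
      have e2 := dist_eq_ell A C P k hk h2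
      have e1' : dist P A * (2*j) = j^2 + 2*⟪P, B - A⟫ + ‖A‖^2 - ‖B‖^2 := by
        rw [e1]; field_simp
      have e2' : dist P A * (2*k) = k^2 + 2*⟪P, C - A⟫ + ‖A‖^2 - ‖C‖^2 := by
        rw [e2]; field_simp
      rw [hv, hcc, inner_sub_right, real_inner_smul_right, real_inner_smul_right]
      linear_combination j*e2' - k*e1'
    rcases conic_line A B P0 n j hj hn with hfin | ⟨_, ⟨r, hr⟩⟩
    · refine ((hfin.image (fun t => P0 + t • n)).subset ?_)
      rintro P ⟨hP1, hP2⟩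
      obtain ⟨t, ht⟩ := hcover P (hline P hP1 hP2)
      refine ⟨t, ?_, ht.symm⟩
      have he := dist_eq_ell A B P j hj hP1
      rw [dist_eq_norm] at he
      simp only [Set.mem_setOf_eq, ← ht]
      rw [← he]
    · rcases conic_line A C P0 n k hk hn with hfin | ⟨_, ⟨r', hr'⟩⟩
      · refine ((hfin.image (fun t => P0 + t • n)).subset ?_)
        rintro P ⟨hP1, hP2⟩
        obtain ⟨t, ht⟩ := hcover P (hline P hP1 hP2)
        refine ⟨t, ?_, ht.symm⟩
        have he := dist_eq_ell A C P k hk hP2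
        rw [dist_eq_norm] at he
        simp only [Set.mem_setOf_eq, ← ht]
        rw [← he]
      · exact (hnotpar r r' n hr hr').elim

/-- A set of points in the Euclidean plane with pairwise integral distances
which is not collinear is finite. -/
theorem finite_of_integral_distances_not_collinear
    (S : Set (EuclideanSpace ℝ (Fin 2)))
    (hdist : ∀ p ∈ S, ∀ q ∈ S, ∃ n : ℤ, dist p q = (n : ℝ))
    (hcol : ¬ Collinear ℝ S) :
    S.Finite := by
  -- extract a noncollinear triple
  have htriple : ∃ A ∈ S, ∃ B ∈ S, ∃ C ∈ S, ¬ Collinear ℝ ({A, B, C} : Set (EuclideanSpace ℝ (Fin 2))) := by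
    by_contra htr
    push_neg at htr
    apply hcol
    rcases S.eq_empty_or_nonempty with rfl | ⟨A, hA⟩
    · exact collinear_empty ℝ _
    by_cases hone : ∀ B ∈ S, B = A
    · refine (collinear_singleton ℝ A).subset ?_
      intro x hx; simp [hone x hx]
    push_neg at hone
    obtain ⟨B, hB, hBA⟩ := hone
    rw [collinear_iff_of_mem hA]
    refine ⟨B -ᵥ A, ?_⟩
    intro p hp
    have hc := htr A hA B hB p hp
    have hmem := hc.mem_affineSpan_of_mem_of_ne
      (show A ∈ ({A, B, p} : Set (EuclideanSpace ℝ (Fin 2))) by simp)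
      (show B ∈ ({A, B, p} : Set (EuclideanSpace ℝ (Fin 2))) by simp)
      (show p ∈ ({A, B, p} : Set (EuclideanSpace ℝ (Fin 2))) by simp)
      (fun h => hBA h.symm)
    have hmem' : (p -ᵥ A) +ᵥ A ∈ line[ℝ, A, B] := by rwa [vsub_vadd]
    obtain ⟨r, hr⟩ := vadd_left_mem_affineSpan_pair.mp hmem'
    exact ⟨r, by rw [hr, vsub_vadd]⟩
  obtain ⟨A, hA, B, hB, C, hC, htri⟩ := htriple
  obtain ⟨mAB, hmAB⟩ := hdist A hA B hB
  obtain ⟨mAC, hmAC⟩ := hdist A hA C hC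
  set F : Finset (ℤ × ℤ) := Finset.Icc (-mAB) mAB ×ˢ Finset.Icc (-mAC) mAC with hF
  have hcover : S ⊆ ⋃ p ∈ (F : Set (ℤ × ℤ)),
      {P : EuclideanSpace ℝ (Fin 2) | dist P A - dist P B = (p.1 : ℝ)
        ∧ dist P A - dist P C = (p.2 : ℝ)} := by
    intro P hP
    obtain ⟨nPA, hnPA⟩ := hdist P hP A hA
    obtain ⟨nPB, hnPB⟩ := hdist P hP B hB
    obtain ⟨nPC, hnPC⟩ := hdist P hP C hC
    have hb1 : |dist P A - dist P B| ≤ dist A B := by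
      have := abs_dist_sub_le A B P
      rwa [dist_comm A P, dist_comm B P] at this
    have hb2 : |dist P A - dist P C| ≤ dist A C := by
      have := abs_dist_sub_le A C P
      rwa [dist_comm A P, dist_comm C P] at this
    rw [hnPA, hnPB, hmAB] at hb1
    rw [hnPA, hnPC, hmAC] at hb2
    have hb1' : |nPA - nPB| ≤ mAB := by exact_mod_cast hb1
    have hb2' : |nPA - nPC| ≤ mAC := by exact_mod_cast hb2
    simp only [Set.mem_iUnion]
    refine ⟨(nPA - nPB, nPA - nPC), ?_, ?_⟩
    · simp only [hF, Finset.coe_product, Set.mem_prod, Finset.mem_coe, Finset.mem_Icc]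
      constructor
      · exact abs_le.mp hb1'
      · exact abs_le.mp hb2'
    · constructor
      · rw [hnPA, hnPB]; push_cast; ring
      · rw [hnPA, hnPC]; push_cast; ring
  refine Set.Finite.subset ?_ hcover
  apply Set.Finite.biUnion F.finite_toSet
  intro p _
  exact fiber_finite A B C htri p.1 p.2
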